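/- Let T ≥ 2, let α ∈ (0,1), let σ : {1,...,T} → {1,...,T} be a bijection, and let T_1,...,T_T be random perishing times with finite means and variances. Suppose: (1) E[T_b] > min{T, ⌈σ(b)/(1 − T^{−α})⌉} for every b, and (2) Σ_{b=1}^T Var(T_b)/(E[T_b] − min{T, ⌈σ(b)/(1 − T^{−α})⌉})² ≤ (1/2)·T^{1−α}. Then for any δ with 3 log(T)·exp(−T^{1−α}/8) ≤ δ < 1, the maximal feasible static allocation satisfies X̲ ≥ 1 − T^{−α}; consequently the perishing-induced loss satisfies ℒ^perish ≤ T^{−α}. -/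

import Mathlib

open MeasureTheory ProbabilityTheory Finset

/-- Worst-case expected spoilage under the static allocation `X`:
`μX(X) = Σ_b P(Tb b < min{T, τ_b(1 ∣ X, σ)})`, where `τ_b(1 ∣ X, σ) = ⌈σ(b)/X⌉` is the
latest possible allocation time of unit `b` (one deterministic arrival per round). -/
noncomputable def muX {Ω : Type*} [MeasurableSpace Ω] (μ : Measure Ω) (T : ℕ)
    (rank : Fin T → ℕ) (Tb : Fin T → Ω → ℕ) (X : ℝ) : ℝ :=
  ∑ b : Fin T, (μ {ω | Tb b ω < min T ⌈(rank b : ℝ) / X⌉₊}).toReal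

/-- The confidence term `Conf^P_1(m) = (1/2)(log(3 log T/δ) + √(log²(3 log T/δ) + 8 m log(3 log T/δ)))`. -/
noncomputable def confP (T : ℕ) (δ m : ℝ) : ℝ :=
  (1 / 2) * (Real.log (3 * Real.log T / δ) +
    Real.sqrt ((Real.log (3 * Real.log T / δ)) ^ 2 + 8 * m * Real.log (3 * Real.log T / δ)))

/-- The worst-case perishing loss `Δ̄(X) = min{B, μX(X) + Conf^P_1(μX(X))}` (here `B = T`). -/
noncomputable def deltaBar {Ω : Type*} [MeasurableSpace Ω] (μ : Measure Ω) (T : ℕ)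
    (rank : Fin T → ℕ) (Tb : Fin T → Ω → ℕ) (δ X : ℝ) : ℝ :=
  min (T : ℝ) (muX μ T rank Tb X + confP T δ (muX μ T rank Tb X))

/-- The maximal feasible static allocation
`X̲ = sup{X ≥ 0 ∣ X ≤ (T − Δ̄(X))/T}` (with `B = T` and `N̄ = T`). -/
noncomputable def Xlower {Ω : Type*} [MeasurableSpace Ω] (μ : Measure Ω) (T : ℕ)
    (rank : Fin T → ℕ) (Tb : Fin T → Ω → ℕ) (δ : ℝ) : ℝ :=
  sSup {X : ℝ | 0 ≤ X ∧ X ≤ ((T : ℝ) - deltaBar μ T rank Tb δ X) / (T : ℝ)}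

/-- Let `T ≥ 2`, `α ∈ (0,1)`, `σ` a bijection of the units (allocation
schedule, `rank b = (σ b) + 1 ∈ {1,…,T}`), and `Tb b` random perishing times with finite
means and variances. If (1) `E[Tb b] > min{T, ⌈σ(b)/(1 − T^{−α})⌉}` for every `b`, and
(2) `Σ_b Var(Tb b)/(E[Tb b] − min{T, ⌈σ(b)/(1 − T^{−α})⌉})² ≤ (1/2)·T^{1−α}`, then for any
`δ` with `3 log(T)·exp(−T^{1−α}/8) ≤ δ < 1`, the maximal feasible static allocation
satisfies `X̲ ≥ 1 − T^{−α}`; consequently the perishing-induced loss satisfies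
`ℒ^perish = 1 − X̲ ≤ T^{−α}`. -/
theorem stmt13 {Ω : Type*} [MeasurableSpace Ω] (μ : Measure Ω) [IsProbabilityMeasure μ]
    (T : ℕ) (hT : 2 ≤ T) (α : ℝ) (hα : α ∈ Set.Ioo (0 : ℝ) 1)
    (σ : Equiv.Perm (Fin T))
    (Tb : Fin T → Ω → ℕ) (hmeas : ∀ b, Measurable (Tb b))
    (hL2 : ∀ b, MemLp (fun ω => (Tb b ω : ℝ)) 2 μ)
    (hroom : ∀ b : Fin T,
      ((min T ⌈(((σ b : ℕ) + 1 : ℕ) : ℝ) / (1 - (T : ℝ) ^ (-α))⌉₊ : ℕ) : ℝ)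
        < ∫ ω, (Tb b ω : ℝ) ∂μ)
    (hvar : ∑ b : Fin T,
        variance (fun ω => (Tb b ω : ℝ)) μ /
          ((∫ ω, (Tb b ω : ℝ) ∂μ) -
            ((min T ⌈(((σ b : ℕ) + 1 : ℕ) : ℝ) / (1 - (T : ℝ) ^ (-α))⌉₊ : ℕ) : ℝ)) ^ 2
      ≤ (1 / 2) * (T : ℝ) ^ ((1 : ℝ) - α))
    (δ : ℝ) (hδlow : 3 * Real.log T * Real.exp (-(T : ℝ) ^ ((1 : ℝ) - α) / 8) ≤ δ)
    (hδhigh : δ < 1) :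
    1 - (T : ℝ) ^ (-α) ≤ Xlower μ T (fun b => (σ b : ℕ) + 1) Tb δ ∧
    1 - Xlower μ T (fun b => (σ b : ℕ) + 1) Tb δ ≤ (T : ℝ) ^ (-α) := by
  obtain ⟨hα0, hα1⟩ := hα
  have hT1 : (1:ℝ) < (T:ℝ) := by exact_mod_cast (by omega : 1 < T)
  have hTpos : (0:ℝ) < (T:ℝ) := by linarith
  set X₀ : ℝ := 1 - (T:ℝ) ^ (-α) with hX₀def
  have hTα_pos : (0:ℝ) < (T:ℝ) ^ (-α) := Real.rpow_pos_of_pos hTpos _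
  have hTα_lt1 : (T:ℝ) ^ (-α) < 1 := Real.rpow_lt_one_of_one_lt_of_neg hT1 (by linarith)
  have hX₀pos : 0 < X₀ := by rw [hX₀def]; linarith
  set K : ℝ := (T:ℝ) ^ ((1:ℝ) - α) with hKdef
  have hKeq : K = (T:ℝ) * (T:ℝ) ^ (-α) := by
    rw [hKdef, sub_eq_add_neg, Real.rpow_add hTpos, Real.rpow_one]
  have hKpos : 0 < K := Real.rpow_pos_of_pos hTpos _
  have hlogT : (0:ℝ) < Real.log T := Real.log_pos hT1
  have hlog1 : (1:ℝ) ≤ 3 * Real.log T := by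
    have h2 : Real.log 2 ≤ Real.log T := by
      apply Real.log_le_log (by norm_num)
      exact_mod_cast hT
    have := Real.log_two_gt_d9
    linarith
  have hδpos : 0 < δ :=
    lt_of_lt_of_le (mul_pos (by linarith) (Real.exp_pos _)) hδlow
  set L : ℝ := Real.log (3 * Real.log T / δ) with hLdef
  have hL0 : 0 ≤ L := by
    rw [hLdef]
    apply Real.log_nonneg
    rw [le_div_iff₀ hδpos]
    linarith
  have hL8 : L ≤ K / 8 := by
    have h1 : 3 * Real.log T ≤ δ * Real.exp (K / 8) := by
      have hmul := mul_le_mul_of_nonneg_right hδlow (Real.exp_pos (K / 8)).le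
      rwa [mul_assoc, ← Real.exp_add, (by ring : -K / 8 + K / 8 = 0), Real.exp_zero,
        mul_one] at hmul
    rw [hLdef]
    rw [Real.log_le_iff_le_exp (div_pos (by linarith) hδpos)]
    rw [div_le_iff₀ hδpos]
    linarith
  -- Chebyshev bound on each term of muX
  have hcheb : ∀ b : Fin T, (μ {ω | Tb b ω <
      min T ⌈(((σ b : ℕ) + 1 : ℕ) : ℝ) / X₀⌉₊}).toReal ≤
      variance (fun ω => (Tb b ω : ℝ)) μ /
        ((∫ ω, (Tb b ω : ℝ) ∂μ) -
          ((min T ⌈(((σ b : ℕ) + 1 : ℕ) : ℝ) / X₀⌉₊ : ℕ) : ℝ)) ^ 2 := by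
    intro b
    have hr := hroom b
    set m : ℕ := min T ⌈(((σ b : ℕ) + 1 : ℕ) : ℝ) / X₀⌉₊ with hmdef
    set E : ℝ := ∫ ω, (Tb b ω : ℝ) ∂μ with hEdef
    have hc : 0 < E - (m : ℝ) := by linarith
    have hsub : {ω | Tb b ω < m} ⊆ {ω | E - (m:ℝ) ≤ |(Tb b ω : ℝ) - E|} := by
      intro ω hω
      simp only [Set.mem_setOf_eq] at hω ⊢
      have hlt : ((Tb b ω : ℝ)) < (m : ℝ) := by exact_mod_cast hω
      rw [abs_sub_comm]
      calc E - (m:ℝ) ≤ E - (Tb b ω : ℝ) := by linarith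
        _ ≤ |E - (Tb b ω : ℝ)| := le_abs_self _
    have h1 := meas_ge_le_variance_div_sq (μ := μ) (hL2 b) hc
    have h2 : μ {ω | Tb b ω < m} ≤
        ENNReal.ofReal (variance (fun ω => (Tb b ω : ℝ)) μ / (E - (m:ℝ)) ^ 2) :=
      le_trans (measure_mono hsub) h1
    exact ENNReal.toReal_le_of_le_ofReal
      (div_nonneg (variance_nonneg _ _) (sq_nonneg _)) h2
  set m₀ : ℝ := muX μ T (fun b => (σ b : ℕ) + 1) Tb X₀ with hm₀def
  have hm₀0 : 0 ≤ m₀ := by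
    rw [hm₀def, muX]
    exact Finset.sum_nonneg fun b _ => ENNReal.toReal_nonneg
  have hm₀K : m₀ ≤ K / 2 := by
    rw [hm₀def, muX]
    calc (∑ b : Fin T, (μ {ω | Tb b ω <
          min T ⌈(((fun b => (σ b : ℕ) + 1) b : ℕ) : ℝ) / X₀⌉₊}).toReal)
        ≤ ∑ b : Fin T, variance (fun ω => (Tb b ω : ℝ)) μ /
            ((∫ ω, (Tb b ω : ℝ) ∂μ) -
              ((min T ⌈(((σ b : ℕ) + 1 : ℕ) : ℝ) / X₀⌉₊ : ℕ) : ℝ)) ^ 2 :=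
          Finset.sum_le_sum fun b _ => hcheb b
      _ ≤ (1 / 2) * K := hvar
      _ = K / 2 := by ring
  -- bound on the confidence term
  have hconf : confP T δ m₀ ≤ 7 * K / 16 := by
    rw [confP, ← hLdef]
    have hsq : L ^ 2 + 8 * m₀ * L ≤ (3 * K / 4) ^ 2 := by
      nlinarith [mul_le_mul hL8 hL8 hL0 (by positivity : (0:ℝ) ≤ K / 8),
        mul_le_mul hm₀K hL8 hL0 (by positivity : (0:ℝ) ≤ K / 2)]
    have hsqrt : Real.sqrt (L ^ 2 + 8 * m₀ * L) ≤ 3 * K / 4 := by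
      calc Real.sqrt (L ^ 2 + 8 * m₀ * L) ≤ Real.sqrt ((3 * K / 4) ^ 2) :=
            Real.sqrt_le_sqrt hsq
        _ = 3 * K / 4 := Real.sqrt_sq (by positivity)
    linarith
  -- X₀ belongs to the feasible set
  have hmem : X₀ ∈ {X : ℝ | 0 ≤ X ∧
      X ≤ ((T : ℝ) - deltaBar μ T (fun b => (σ b : ℕ) + 1) Tb δ X) / (T : ℝ)} := by
    refine ⟨hX₀pos.le, ?_⟩
    have hΔ : deltaBar μ T (fun b => (σ b : ℕ) + 1) Tb δ X₀ ≤ K := by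
      rw [deltaBar, ← hm₀def]
      refine le_trans (min_le_right _ _) ?_
      linarith
    rw [le_div_iff₀ hTpos]
    have hX₀T : X₀ * (T:ℝ) = (T:ℝ) - K := by rw [hX₀def, hKeq]; ring
    linarith
  -- the feasible set is bounded above by 1
  have hbdd : BddAbove {X : ℝ | 0 ≤ X ∧
      X ≤ ((T : ℝ) - deltaBar μ T (fun b => (σ b : ℕ) + 1) Tb δ X) / (T : ℝ)} := by
    refine ⟨1, fun X hX => ?_⟩
    obtain ⟨hX0, hXle⟩ := hX
    have hΔ0 : 0 ≤ deltaBar μ T (fun b => (σ b : ℕ) + 1) Tb δ X := by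
      rw [deltaBar]
      apply le_min hTpos.le
      have hμ0 : 0 ≤ muX μ T (fun b => (σ b : ℕ) + 1) Tb X := by
        rw [muX]; exact Finset.sum_nonneg fun b _ => ENNReal.toReal_nonneg
      have hc0 : 0 ≤ confP T δ (muX μ T (fun b => (σ b : ℕ) + 1) Tb X) := by
        rw [confP, ← hLdef]
        have := Real.sqrt_nonneg
          (L ^ 2 + 8 * muX μ T (fun b => (σ b : ℕ) + 1) Tb X * L)
        linarith
      linarith
    calc X ≤ ((T:ℝ) - deltaBar μ T (fun b => (σ b : ℕ) + 1) Tb δ X) / (T:ℝ) := hXle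
      _ ≤ (T:ℝ) / (T:ℝ) := by gcongr; linarith
      _ = 1 := div_self hTpos.ne'
  have hfirst : X₀ ≤ Xlower μ T (fun b => (σ b : ℕ) + 1) Tb δ := by
    rw [Xlower]
    exact le_csSup hbdd hmem
  exact ⟨hfirst, by rw [hX₀def] at hfirst; linarith⟩
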